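/- Suppose ξ admits the two decompositions ξ = Ũ_0 + Σ_{k=0}^{N−1} H^F_k·ΔM_k + Õ_N P-a.s. and ξ = U_0 + Σ_{k=0}^{N−1} H^H_k·ΔM_k + O_N P-a.s., where: Ũ_0 is square-integrable F_0-measurable, each H^F_k is F_k-measurable and square-integrable with H^F_k·ΔM_k square-integrable, and E[Õ_N·(V_0 + Σ_k φ_k·ΔM_k)] = 0 for every square-integrable F_0-measurable V_0 and every φ with φ_k F_k-measurable and φ_k·ΔM_k square-integrable; U_0 is square-integrable H_0-measurable, H^H is an admissible ℍ-predictable process with each H^H_k square-integrable, and E[O_N·η] = 0 for every η ∈ L^H. Then for every k < N, with w_k := E[(ΔM_k)² | F_k], one has H^H_k · E[w_k | H_k] = E[H^F_k·w_k | H_k] P-almost surely. -/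

import Mathlib

open MeasureTheory

section Stmt12Aux

variable {Ω : Type*} {mΩ : MeasurableSpace Ω} {P : Measure Ω} [IsProbabilityMeasure P]

lemma stmt12_integrable_mul {f g : Ω → ℝ} (hf : MemLp f 2 P) (hg : MemLp g 2 P) :
    Integrable (fun ω => f ω * g ω) P := by
  have h : MemLp (f • g) 1 P := hg.smul hf
  rw [memLp_one_iff_integrable] at h
  exact h.congr (Filter.Eventually.of_forall fun ω => by simp [smul_eq_mul])

/-- Expectation of an `𝔽 j`-measurable function times a martingale increment is zero. -/
lemma stmt12_increment_zero (𝔽 : Filtration ℕ mΩ) {M : ℕ → Ω → ℝ}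
    (hM : Martingale M 𝔽 P) (j : ℕ) {X : Ω → ℝ}
    (hX : StronglyMeasurable[𝔽 j] X)
    (hint : Integrable (fun ω => X ω * (M (j + 1) ω - M j ω)) P) :
    ∫ ω, X ω * (M (j + 1) ω - M j ω) ∂P = 0 := by
  have hj : 𝔽 j ≤ mΩ := 𝔽.le j
  have hMi : Integrable (fun ω => M (j + 1) ω - M j ω) P :=
    (hM.integrable (j + 1)).sub (hM.integrable j)
  have hce : P[fun ω => M (j + 1) ω - M j ω | 𝔽 j] =ᵐ[P] (fun _ => (0 : ℝ)) := by
    have h1 : P[M (j + 1) | 𝔽 j] =ᵐ[P] M j := hM.condExp_ae_eq (Nat.le_succ j)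
    have h2 : P[fun ω => M (j + 1) ω - M j ω | 𝔽 j]
        =ᵐ[P] P[M (j + 1) | 𝔽 j] - P[M j | 𝔽 j] :=
      condExp_sub (hM.integrable (j + 1)) (hM.integrable j) _
    have h3 : P[M j | 𝔽 j] = M j :=
      condExp_of_stronglyMeasurable hj (hM.stronglyAdapted j) (hM.integrable j)
    rw [h3] at h2
    filter_upwards [h1, h2] with ω e1 e2
    simp only [Pi.sub_apply] at e2 ⊢
    rw [e2, e1]; ring
  have hpull : P[fun ω => X ω * (M (j + 1) ω - M j ω) | 𝔽 j]
      =ᵐ[P] fun ω => X ω * (P[fun ω => M (j + 1) ω - M j ω | 𝔽 j]) ω :=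
    condExp_mul_of_stronglyMeasurable_left hX hint hMi
  have hz : P[fun ω => X ω * (M (j + 1) ω - M j ω) | 𝔽 j] =ᵐ[P] (fun _ => (0 : ℝ)) := by
    filter_upwards [hpull, hce] with ω e1 e2
    rw [e1, e2]; ring
  calc ∫ ω, X ω * (M (j + 1) ω - M j ω) ∂P
      = ∫ ω, (P[fun ω => X ω * (M (j + 1) ω - M j ω) | 𝔽 j]) ω ∂P :=
        (integral_condExp hj).symm
    _ = ∫ _ω, (0 : ℝ) ∂P := integral_congr_ae hz
    _ = 0 := by simp

/-- Cross terms vanish: for `j ≠ k`, `E[(A ΔM_j)(B ΔM_k)] = 0`. -/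
lemma stmt12_cross_zero (𝔽 : Filtration ℕ mΩ) {M : ℕ → Ω → ℝ}
    (hM : Martingale M 𝔽 P) {j k : ℕ} (hjk : j ≠ k) {A B : Ω → ℝ}
    (hA : StronglyMeasurable[𝔽 j] A) (hB : StronglyMeasurable[𝔽 k] B)
    (hA2 : MemLp (fun ω => A ω * (M (j + 1) ω - M j ω)) 2 P)
    (hB2 : MemLp (fun ω => B ω * (M (k + 1) ω - M k ω)) 2 P) :
    ∫ ω, (A ω * (M (j + 1) ω - M j ω)) * (B ω * (M (k + 1) ω - M k ω)) ∂P = 0 := by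
  have hint : Integrable
      (fun ω => (A ω * (M (j + 1) ω - M j ω)) * (B ω * (M (k + 1) ω - M k ω))) P :=
    stmt12_integrable_mul hA2 hB2
  rcases lt_or_gt_of_ne hjk with h | h
  · -- j < k
    have hXm : StronglyMeasurable[𝔽 k]
        (fun ω => A ω * (M (j + 1) ω - M j ω) * B ω) :=
      ((hA.mono (𝔽.mono h.le)).mul
        (((hM.stronglyAdapted (j + 1)).mono (𝔽.mono h)).sub
          ((hM.stronglyAdapted j).mono (𝔽.mono h.le)))).mul hB
    have heq : (fun ω => (A ω * (M (j + 1) ω - M j ω)) * (B ω * (M (k + 1) ω - M k ω)))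
        = fun ω => (A ω * (M (j + 1) ω - M j ω) * B ω) * (M (k + 1) ω - M k ω) := by
      funext ω; ring
    rw [heq] at hint ⊢
    exact stmt12_increment_zero 𝔽 hM k hXm hint
  · -- k < j
    have hXm : StronglyMeasurable[𝔽 j]
        (fun ω => A ω * (B ω * (M (k + 1) ω - M k ω))) :=
      hA.mul ((hB.mono (𝔽.mono h.le)).mul
        (((hM.stronglyAdapted (k + 1)).mono (𝔽.mono h)).sub
          ((hM.stronglyAdapted k).mono (𝔽.mono h.le))))
    have heq : (fun ω => (A ω * (M (j + 1) ω - M j ω)) * (B ω * (M (k + 1) ω - M k ω)))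
        = fun ω => (A ω * (B ω * (M (k + 1) ω - M k ω))) * (M (j + 1) ω - M j ω) := by
      funext ω; ring
    rw [heq] at hint ⊢
    exact stmt12_increment_zero 𝔽 hM j hXm hint

/-- Evaluating the integral of a GKW-type decomposition against `ψ · ΔM_k`. -/
lemma stmt12_decomp_integral (𝔽 : Filtration ℕ mΩ) {M : ℕ → Ω → ℝ}
    (hM : Martingale M 𝔽 P) (N k : ℕ) (hk : k < N)
    {ψ : Ω → ℝ} (hψ : StronglyMeasurable[𝔽 k] ψ)
    (hψ2 : MemLp (fun ω => ψ ω * (M (k + 1) ω - M k ω)) 2 P)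
    {U O : Ω → ℝ} {H : ℕ → Ω → ℝ}
    (hUmeas : StronglyMeasurable[𝔽 0] U) (hU2 : MemLp U 2 P)
    (hHmeas : ∀ j, StronglyMeasurable[𝔽 j] (H j))
    (hHM2 : ∀ j, MemLp (fun ω => H j ω * (M (j + 1) ω - M j ω)) 2 P)
    (hO2 : MemLp O 2 P)
    (hOg : ∫ ω, O ω * (ψ ω * (M (k + 1) ω - M k ω)) ∂P = 0) :
    ∫ ω, (U ω + (∑ j ∈ Finset.range N, H j ω * (M (j + 1) ω - M j ω)) + O ω)
        * (ψ ω * (M (k + 1) ω - M k ω)) ∂P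
      = ∫ ω, (H k ω * (M (k + 1) ω - M k ω)) * (ψ ω * (M (k + 1) ω - M k ω)) ∂P := by
  have hUg_int : Integrable (fun ω => U ω * (ψ ω * (M (k + 1) ω - M k ω))) P :=
    stmt12_integrable_mul hU2 hψ2
  have hterm_int : ∀ j, Integrable
      (fun ω => (H j ω * (M (j + 1) ω - M j ω)) * (ψ ω * (M (k + 1) ω - M k ω))) P :=
    fun j => stmt12_integrable_mul (hHM2 j) hψ2
  have hOg_int : Integrable (fun ω => O ω * (ψ ω * (M (k + 1) ω - M k ω))) P :=
    stmt12_integrable_mul hO2 hψ2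
  have hsplit : (fun ω => (U ω + (∑ j ∈ Finset.range N, H j ω * (M (j + 1) ω - M j ω)) + O ω)
        * (ψ ω * (M (k + 1) ω - M k ω)))
      = fun ω => (U ω * (ψ ω * (M (k + 1) ω - M k ω))
          + ∑ j ∈ Finset.range N,
              (H j ω * (M (j + 1) ω - M j ω)) * (ψ ω * (M (k + 1) ω - M k ω)))
          + O ω * (ψ ω * (M (k + 1) ω - M k ω)) := by
    funext ω
    rw [← Finset.sum_mul]
    ring
  have hsum_int : Integrable (fun ω => ∑ j ∈ Finset.range N,
      (H j ω * (M (j + 1) ω - M j ω)) * (ψ ω * (M (k + 1) ω - M k ω))) P :=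
    integrable_finset_sum _ fun j _ => hterm_int j
  rw [hsplit]
  have e1 : ∫ ω, ((U ω * (ψ ω * (M (k + 1) ω - M k ω))
          + ∑ j ∈ Finset.range N,
              (H j ω * (M (j + 1) ω - M j ω)) * (ψ ω * (M (k + 1) ω - M k ω)))
          + O ω * (ψ ω * (M (k + 1) ω - M k ω))) ∂P
      = (∫ ω, (U ω * (ψ ω * (M (k + 1) ω - M k ω))
          + ∑ j ∈ Finset.range N,
              (H j ω * (M (j + 1) ω - M j ω)) * (ψ ω * (M (k + 1) ω - M k ω))) ∂P)
        + ∫ ω, O ω * (ψ ω * (M (k + 1) ω - M k ω)) ∂P :=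
    integral_add (hUg_int.add hsum_int) hOg_int
  have e2 : ∫ ω, (U ω * (ψ ω * (M (k + 1) ω - M k ω))
          + ∑ j ∈ Finset.range N,
              (H j ω * (M (j + 1) ω - M j ω)) * (ψ ω * (M (k + 1) ω - M k ω))) ∂P
      = (∫ ω, U ω * (ψ ω * (M (k + 1) ω - M k ω)) ∂P)
        + ∫ ω, (∑ j ∈ Finset.range N,
            (H j ω * (M (j + 1) ω - M j ω)) * (ψ ω * (M (k + 1) ω - M k ω))) ∂P :=
    integral_add hUg_int hsum_int
  rw [e1, e2, integral_finset_sum _ fun j _ => hterm_int j, hOg]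
  have hU0 : ∫ ω, U ω * (ψ ω * (M (k + 1) ω - M k ω)) ∂P = 0 := by
    have heq : (fun ω => U ω * (ψ ω * (M (k + 1) ω - M k ω)))
        = fun ω => (U ω * ψ ω) * (M (k + 1) ω - M k ω) := by funext ω; ring
    rw [heq]
    exact stmt12_increment_zero 𝔽 hM k ((hUmeas.mono (𝔽.mono (Nat.zero_le k))).mul hψ)
      (heq ▸ hUg_int)
  rw [hU0]
  have hsum : ∑ j ∈ Finset.range N,
      ∫ ω, (H j ω * (M (j + 1) ω - M j ω)) * (ψ ω * (M (k + 1) ω - M k ω)) ∂P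
      = ∫ ω, (H k ω * (M (k + 1) ω - M k ω)) * (ψ ω * (M (k + 1) ω - M k ω)) ∂P := by
    rw [Finset.sum_eq_single k]
    · intro j _ hne
      exact stmt12_cross_zero 𝔽 hM hne (hHmeas j) hψ (hHM2 j) hψ2
    · intro hnk
      exact absurd (Finset.mem_range.mpr hk) hnk
  rw [hsum]
  ring

end Stmt12Aux

/-- Discrete form of the paper's Theorem 4.5 / Proposition 4.6: given a full-information
GKW decomposition `(Utilde, HF, OtildeN)` and a partial-information GKW decomposition
`(U₀, HH, ON)` of the same `ξ`, the partial-information integrand satisfies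
`HH_k · E[w_k|ℍ k] = E[HF_k · w_k|ℍ k]` a.s. for `k < N`, where `w_k = E[(ΔM_k)²|𝔽 k]`. -/
theorem stmt_12 {Ω : Type*} {mΩ : MeasurableSpace Ω} {P : Measure Ω} [IsProbabilityMeasure P]
    (N : ℕ) (𝔽 ℍ : Filtration ℕ mΩ) (hle : ∀ k, ℍ k ≤ 𝔽 k)
    (M : ℕ → Ω → ℝ) (hM : Martingale M 𝔽 P) (hM2 : ∀ k, MemLp (M k) 2 P)
    (ξ : Ω → ℝ) (hξ : MemLp ξ 2 P)
    -- the full-information decomposition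
    (Utilde : Ω → ℝ) (HF : ℕ → Ω → ℝ) (OtildeN : Ω → ℝ)
    (hUtmeas : StronglyMeasurable[𝔽 0] Utilde) (hUt2 : MemLp Utilde 2 P)
    (hHFmeas : ∀ k, StronglyMeasurable[𝔽 k] (HF k))
    (hHF2 : ∀ k, MemLp (HF k) 2 P)
    (hHFM2 : ∀ k, MemLp (fun ω => HF k ω * (M (k + 1) ω - M k ω)) 2 P)
    (hOtorth : ∀ (V₀ : Ω → ℝ) (φ : ℕ → Ω → ℝ), MemLp V₀ 2 P →
      StronglyMeasurable[𝔽 0] V₀ →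
      (∀ k, StronglyMeasurable[𝔽 k] (φ k)) →
      (∀ k, MemLp (fun ω => φ k ω * (M (k + 1) ω - M k ω)) 2 P) →
      ∫ ω, OtildeN ω * (V₀ ω + ∑ k ∈ Finset.range N, φ k ω * (M (k + 1) ω - M k ω)) ∂P = 0)
    (hdecF : ξ =ᵐ[P] fun ω =>
      Utilde ω + (∑ k ∈ Finset.range N, HF k ω * (M (k + 1) ω - M k ω)) + OtildeN ω)
    -- the partial-information decomposition
    (U₀ : Ω → ℝ) (HH : ℕ → Ω → ℝ) (ON : Ω → ℝ)
    (hU₀meas : StronglyMeasurable[ℍ 0] U₀) (hU₀2 : MemLp U₀ 2 P)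
    (hHHmeas : ∀ k, StronglyMeasurable[ℍ k] (HH k))
    (hHH2 : ∀ k, MemLp (HH k) 2 P)
    (hHHM2 : ∀ k, MemLp (fun ω => HH k ω * (M (k + 1) ω - M k ω)) 2 P)
    (hOorth : ∀ (V₀ : Ω → ℝ) (φ : ℕ → Ω → ℝ), MemLp V₀ 2 P →
      StronglyMeasurable[ℍ 0] V₀ →
      (∀ k, StronglyMeasurable[ℍ k] (φ k)) →
      (∀ k, MemLp (fun ω => φ k ω * (M (k + 1) ω - M k ω)) 2 P) →
      ∫ ω, ON ω * (V₀ ω + ∑ k ∈ Finset.range N, φ k ω * (M (k + 1) ω - M k ω)) ∂P = 0)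
    (hdecH : ξ =ᵐ[P] fun ω =>
      U₀ ω + (∑ k ∈ Finset.range N, HH k ω * (M (k + 1) ω - M k ω)) + ON ω) :
    ∀ k < N,
      (fun ω => HH k ω *
          (P[P[fun ω' => (M (k + 1) ω' - M k ω') ^ 2 | 𝔽 k] | ℍ k]) ω)
        =ᵐ[P]
      P[fun ω => HF k ω *
          (P[fun ω' => (M (k + 1) ω' - M k ω') ^ 2 | 𝔽 k]) ω | ℍ k] := by
  intro k hk
  classical
  have hFk : 𝔽 k ≤ mΩ := 𝔽.le k
  have hHk : ℍ k ≤ mΩ := (hle k).trans hFk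
  haveI : SigmaFinite (P.trim hFk) := inferInstance
  haveI : SigmaFinite (P.trim hHk) := inferInstance
  set w : Ω → ℝ := P[fun ω' => (M (k + 1) ω' - M k ω') ^ 2 | 𝔽 k] with hwdef
  have hΔM2 : MemLp (fun ω => M (k + 1) ω - M k ω) 2 P := (hM2 (k + 1)).sub (hM2 k)
  have hsq_int : Integrable (fun ω => (M (k + 1) ω - M k ω) ^ 2) P := by
    have h := stmt12_integrable_mul hΔM2 hΔM2
    exact h.congr (Filter.Eventually.of_forall fun ω => (pow_two _).symm)
  -- conditional-expectation identity for the weight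
  have key_ce : ∀ (G : Ω → ℝ), StronglyMeasurable[𝔽 k] G →
      MemLp (fun ω => G ω * (M (k + 1) ω - M k ω)) 2 P →
      Integrable (fun ω => G ω * w ω) P ∧
      ∀ s, MeasurableSet[𝔽 k] s →
        ∫ ω in s, G ω * w ω ∂P = ∫ ω in s, G ω * (M (k + 1) ω - M k ω) ^ 2 ∂P := by
    intro G hGmeas hGM2
    have hGsq_int : Integrable (fun ω => G ω * (M (k + 1) ω - M k ω) ^ 2) P := by
      have h := stmt12_integrable_mul hGM2 hΔM2
      exact h.congr (Filter.Eventually.of_forall fun ω => by ring)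
    have hpull : P[fun ω => G ω * (M (k + 1) ω - M k ω) ^ 2 | 𝔽 k]
        =ᵐ[P] fun ω => G ω * w ω := by
      have h := condExp_mul_of_stronglyMeasurable_left (m := 𝔽 k) hGmeas
        (g := fun ω' => (M (k + 1) ω' - M k ω') ^ 2) hGsq_int hsq_int
      exact h
    have hGw_int : Integrable (fun ω => G ω * w ω) P := integrable_condExp.congr hpull
    refine ⟨hGw_int, fun s hs => ?_⟩
    have h1 : ∫ ω in s, G ω * w ω ∂P
        = ∫ ω in s, (P[fun ω => G ω * (M (k + 1) ω - M k ω) ^ 2 | 𝔽 k]) ω ∂P :=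
      setIntegral_congr_ae (hFk s hs) (hpull.symm.mono fun ω h _ => h)
    rw [h1, setIntegral_condExp hFk hGsq_int hs]
  -- the key set-integral identity from the two decompositions
  have main : ∀ s, MeasurableSet[ℍ k] s →
      ∫ ω in s, HH k ω * (M (k + 1) ω - M k ω) ^ 2 ∂P
        = ∫ ω in s, HF k ω * (M (k + 1) ω - M k ω) ^ 2 ∂P := by
    intro s hs
    have hsF : MeasurableSet[𝔽 k] s := hle k s hs
    have hsΩ : MeasurableSet s := hFk s hsF
    set ψ : Ω → ℝ := s.indicator (fun _ => 1) with hψdef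
    have hψmeasH : StronglyMeasurable[ℍ k] ψ := stronglyMeasurable_const.indicator hs
    have hψmeasF : StronglyMeasurable[𝔽 k] ψ := hψmeasH.mono (hle k)
    have hψΔM2 : MemLp (fun ω => ψ ω * (M (k + 1) ω - M k ω)) 2 P := by
      have heq : (fun ω => ψ ω * (M (k + 1) ω - M k ω))
          = s.indicator (fun ω => M (k + 1) ω - M k ω) := by
        funext ω
        by_cases hω : ω ∈ s <;> simp [hψdef, hω]
      rw [heq]
      exact hΔM2.indicator hsΩ
    -- the test process
    set φ : ℕ → Ω → ℝ := fun j ω => if j = k then ψ ω else 0 with hφdef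
    have hφmeasH : ∀ j, StronglyMeasurable[ℍ j] (φ j) := by
      intro j
      by_cases hj : j = k
      · subst hj; simpa [hφdef] using hψmeasH
      · simp only [hφdef, hj, if_false]
        exact stronglyMeasurable_const
    have hφmeasF : ∀ j, StronglyMeasurable[𝔽 j] (φ j) := fun j => (hφmeasH j).mono (hle j)
    have hφ2 : ∀ j, MemLp (fun ω => φ j ω * (M (j + 1) ω - M j ω)) 2 P := by
      intro j
      by_cases hj : j = k
      · subst hj; simpa [hφdef] using hψΔM2
      · simp only [hφdef, hj, if_false, zero_mul]
        exact memLp_const 0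
    have hsumφ : ∀ ω, (∑ j ∈ Finset.range N, φ j ω * (M (j + 1) ω - M j ω))
        = ψ ω * (M (k + 1) ω - M k ω) := by
      intro ω
      rw [Finset.sum_eq_single k]
      · simp [hφdef]
      · intro j _ hne; simp [hφdef, hne]
      · intro hnk; exact absurd (Finset.mem_range.mpr hk) hnk
    have hOg : ∫ ω, ON ω * (ψ ω * (M (k + 1) ω - M k ω)) ∂P = 0 := by
      have h := hOorth (fun _ => 0) φ (memLp_const 0) stronglyMeasurable_const hφmeasH hφ2
      rw [← h]
      apply integral_congr_ae
      filter_upwards with ω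
      rw [hsumφ ω]
      ring
    have hOtg : ∫ ω, OtildeN ω * (ψ ω * (M (k + 1) ω - M k ω)) ∂P = 0 := by
      have h := hOtorth (fun _ => 0) φ (memLp_const 0) stronglyMeasurable_const hφmeasF hφ2
      rw [← h]
      apply integral_congr_ae
      filter_upwards with ω
      rw [hsumφ ω]
      ring
    -- square-integrability of the orthogonal parts
    have hSF2 : MemLp (fun ω => ∑ j ∈ Finset.range N, HF j ω * (M (j + 1) ω - M j ω)) 2 P := by
      have h := memLp_finset_sum (μ := P) (p := 2) (Finset.range N)
        (f := fun j ω => HF j ω * (M (j + 1) ω - M j ω)) (fun j _ => hHFM2 j)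
      exact h
    have hSH2 : MemLp (fun ω => ∑ j ∈ Finset.range N, HH j ω * (M (j + 1) ω - M j ω)) 2 P := by
      have h := memLp_finset_sum (μ := P) (p := 2) (Finset.range N)
        (f := fun j ω => HH j ω * (M (j + 1) ω - M j ω)) (fun j _ => hHHM2 j)
      exact h
    have hOt2 : MemLp OtildeN 2 P := by
      have : OtildeN =ᵐ[P] fun ω =>
          ξ ω - Utilde ω - ∑ j ∈ Finset.range N, HF j ω * (M (j + 1) ω - M j ω) := by
        filter_upwards [hdecF] with ω h
        rw [h]; ring
      exact ((hξ.sub hUt2).sub hSF2).ae_eq this.symm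
    have hON2 : MemLp ON 2 P := by
      have : ON =ᵐ[P] fun ω =>
          ξ ω - U₀ ω - ∑ j ∈ Finset.range N, HH j ω * (M (j + 1) ω - M j ω) := by
        filter_upwards [hdecH] with ω h
        rw [h]; ring
      exact ((hξ.sub hU₀2).sub hSH2).ae_eq this.symm
    -- evaluate ∫ ξ (ψ ΔM) via both decompositions
    have hF_eval := stmt12_decomp_integral 𝔽 hM N k hk hψmeasF hψΔM2 hUtmeas hUt2
      hHFmeas hHFM2 hOt2 hOtg
    have hH_eval := stmt12_decomp_integral 𝔽 hM N k hk hψmeasF hψΔM2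
      (hU₀meas.mono (hle 0)) hU₀2 (fun j => (hHHmeas j).mono (hle j))
      hHHM2 hON2 hOg
    have hFξ : ∫ ω, ξ ω * (ψ ω * (M (k + 1) ω - M k ω)) ∂P
        = ∫ ω, (HF k ω * (M (k + 1) ω - M k ω)) * (ψ ω * (M (k + 1) ω - M k ω)) ∂P := by
      rw [← hF_eval]
      apply integral_congr_ae
      filter_upwards [hdecF] with ω h
      rw [h]
    have hHξ : ∫ ω, ξ ω * (ψ ω * (M (k + 1) ω - M k ω)) ∂P
        = ∫ ω, (HH k ω * (M (k + 1) ω - M k ω)) * (ψ ω * (M (k + 1) ω - M k ω)) ∂P := by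
      rw [← hH_eval]
      apply integral_congr_ae
      filter_upwards [hdecH] with ω h
      rw [h]
    have hcentral : ∫ ω, (HH k ω * (M (k + 1) ω - M k ω)) * (ψ ω * (M (k + 1) ω - M k ω)) ∂P
        = ∫ ω, (HF k ω * (M (k + 1) ω - M k ω)) * (ψ ω * (M (k + 1) ω - M k ω)) ∂P := by
      rw [← hHξ, hFξ]
    -- convert to set integrals
    have hind : ∀ (G : Ω → ℝ),
        ∫ ω, (G ω * (M (k + 1) ω - M k ω)) * (ψ ω * (M (k + 1) ω - M k ω)) ∂P
          = ∫ ω in s, G ω * (M (k + 1) ω - M k ω) ^ 2 ∂P := by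
      intro G
      rw [← integral_indicator hsΩ]
      apply integral_congr_ae
      filter_upwards with ω
      by_cases hω : ω ∈ s <;> simp [hψdef, hω, Set.indicator_of_mem, Set.indicator_of_notMem]
        <;> ring
    rw [← hind (HH k), ← hind (HF k)]
    exact hcentral
  -- assemble via uniqueness of conditional expectation
  obtain ⟨hHHw_int, hHHw_eq⟩ := key_ce (HH k) ((hHHmeas k).mono (hle k)) (hHHM2 k)
  obtain ⟨hHFw_int, hHFw_eq⟩ := key_ce (HF k) (hHFmeas k) (hHFM2 k)
  have step1 : P[fun ω => HH k ω * w ω | ℍ k] =ᵐ[P] P[fun ω => HF k ω * w ω | ℍ k] := by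
    refine ae_eq_condExp_of_forall_setIntegral_eq hHk hHFw_int
      (fun s _ _ => integrable_condExp.integrableOn) (fun s hs _ => ?_)
      stronglyMeasurable_condExp.aestronglyMeasurable
    rw [setIntegral_condExp hHk hHHw_int hs, hHHw_eq s (hle k s hs),
      main s hs, ← hHFw_eq s (hle k s hs)]
  have step2 : P[fun ω => HH k ω * w ω | ℍ k]
      =ᵐ[P] fun ω => HH k ω * (P[w | ℍ k]) ω := by
    have h := condExp_mul_of_stronglyMeasurable_left (m := ℍ k) (hHHmeas k)
      (g := w) hHHw_int integrable_condExp
    exact h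
  exact step2.symm.trans step1
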